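/- Let p ≥ 2 be an integer and α ≥ 0 a real number with α ∈ ℤ≥0 ∪ [p−2, ∞). Then the function Ω(x)^α is TN_p, i.e., the Toeplitz kernel (x,y) ↦ Ω(x−y)^α on ℝ × ℝ is totally non-negative of order p. -/

import Mathlib

open Matrix Set Filter Topology

noncomputable def tp (α u : ℝ) : ℝ := if 0 < u then u ^ α else 0

lemma tp_of_pos {u : ℝ} (h : 0 < u) (α : ℝ) : tp α u = u ^ α := if_pos h
lemma tp_of_nonpos {u : ℝ} (h : u ≤ 0) (α : ℝ) : tp α u = 0 := if_neg (not_lt.2 h)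

lemma tp_nonneg (α u : ℝ) : 0 ≤ tp α u := by
  unfold tp; split
  · exact Real.rpow_nonneg (le_of_lt ‹_›) _
  · exact le_refl 0

lemma tp_pos {u : ℝ} (h : 0 < u) (α : ℝ) : 0 < tp α u := by
  rw [tp_of_pos h]; exact Real.rpow_pos_of_pos h _

lemma tp_eq_max {α : ℝ} (hα : 0 < α) (u : ℝ) : tp α u = (max u 0) ^ α := by
  unfold tp; split
  · rw [max_eq_left (le_of_lt ‹_›)]
  · rw [max_eq_right (not_lt.1 ‹_›), Real.zero_rpow (ne_of_gt hα)]

lemma continuous_tp {α : ℝ} (hα : 0 < α) : Continuous fun u => tp α u := by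
  have : (fun u => tp α u) = fun u => (max u 0) ^ α := funext (tp_eq_max hα)
  rw [this]
  have hc : Continuous fun u : ℝ => max u 0 := continuous_id.max continuous_const
  exact (continuous_iff_continuousAt.2 fun x =>
    Real.continuousAt_rpow_const x α (Or.inr hα.le)).comp hc

lemma tp_succ {α u : ℝ} : tp α u = tp (α - 1) u * u := by
  unfold tp; split
  · rw [← Real.rpow_add_one (ne_of_gt ‹_›)]; ring_nf
  · simp

lemma hasDerivAt_tp {α : ℝ} (hα : 1 < α) (c t : ℝ) :
    HasDerivAt (fun s => tp α (s - c)) (α * tp (α - 1) (t - c)) t := by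
  rcases lt_trichotomy t c with h | h | h
  · have h0 : tp (α - 1) (t - c) = 0 := tp_of_nonpos (by linarith) _
    rw [h0, mul_zero]
    have : (fun s => tp α (s - c)) =ᶠ[nhds t] fun _ => (0:ℝ) := by
      filter_upwards [Iio_mem_nhds h] with s hs
      exact tp_of_nonpos (by simp only [mem_Iio] at hs; linarith) _
    exact (hasDerivAt_const t 0).congr_of_eventuallyEq this
  · subst h
    have h0 : tp (α - 1) (t - t) = 0 := tp_of_nonpos (by linarith) _
    rw [h0, mul_zero]
    rw [hasDerivAt_iff_tendsto_slope]
    apply squeeze_zero_norm' (a := fun s => |s - t| ^ (α - 1))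
    · filter_upwards [self_mem_nhdsWithin] with s (hs : s ≠ t)
      rcases lt_or_gt_of_ne hs with h1 | h1
      · have : tp α (s - t) = 0 := tp_of_nonpos (by linarith) _
        simp [slope_def_field, this, sub_self, tp_of_nonpos]
        positivity
      · have hpos : (0:ℝ) < s - t := by linarith
        have : slope (fun s => tp α (s - t)) t s = (s - t) ^ (α - 1) := by
          rw [slope_def_field]
          rw [tp_of_pos hpos, tp_of_nonpos (by simp) α]
          rw [show α = (α - 1) + 1 by ring, Real.rpow_add_one (ne_of_gt hpos)]
          field_simp
          rw [sub_zero, show α - 1 + 1 - 1 = α - 1 by ring]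
        rw [this, Real.norm_eq_abs, abs_of_nonneg (Real.rpow_nonneg hpos.le _),
          abs_of_pos hpos]
    · have : Tendsto (fun s : ℝ => |s - t|) (nhdsWithin t {t}ᶜ) (nhds 0) := by
        apply Tendsto.mono_left _ nhdsWithin_le_nhds
        have h2 : Tendsto (fun s : ℝ => s - t) (nhds t) (nhds (t - t)) :=
          (continuous_id.sub continuous_const).tendsto t
        rw [sub_self] at h2
        simpa using h2.abs
      have hc : ContinuousAt (fun x : ℝ => x ^ (α - 1)) 0 :=
        Real.continuousAt_rpow_const 0 (α - 1) (Or.inr (by linarith))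
      have := hc.tendsto.comp this
      rwa [Real.zero_rpow (ne_of_gt (by linarith) : α - 1 ≠ 0)] at this
  · have hev : (fun s => tp α (s - c)) =ᶠ[nhds t] fun s => (s - c) ^ α := by
      filter_upwards [Ioi_mem_nhds h] with s hs
      exact tp_of_pos (by simp only [mem_Ioi] at hs; linarith) _
    have hd : HasDerivAt (fun s => (s - c) ^ α) (α * tp (α - 1) (t - c)) t := by
      have h1 : HasDerivAt (fun s : ℝ => s - c) 1 t := (hasDerivAt_id t).sub_const c
      have := (Real.hasDerivAt_rpow_const (p := α)
        (Or.inl (by linarith : t - c ≠ 0))).comp t h1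
      simpa [tp_of_pos (by linarith : (0:ℝ) < t - c), mul_comm, Function.comp_def] using this
    exact hd.congr_of_eventuallyEq hev

lemma hasDerivAt_tp_ne {α c t : ℝ} (h : t ≠ c) :
    HasDerivAt (fun s => tp α (s - c)) (α * tp (α - 1) (t - c)) t := by
  rcases lt_or_gt_of_ne h with h | h
  · have h0 : tp (α - 1) (t - c) = 0 := tp_of_nonpos (by linarith) _
    rw [h0, mul_zero]
    have : (fun s => tp α (s - c)) =ᶠ[nhds t] fun _ => (0:ℝ) := by
      filter_upwards [Iio_mem_nhds h] with s hs
      exact tp_of_nonpos (by simp only [mem_Iio] at hs; linarith) _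
    exact (hasDerivAt_const t 0).congr_of_eventuallyEq this
  · have hev : (fun s => tp α (s - c)) =ᶠ[nhds t] fun s => (s - c) ^ α := by
      filter_upwards [Ioi_mem_nhds h] with s hs
      exact tp_of_pos (by simp only [mem_Ioi] at hs; linarith) _
    have hd : HasDerivAt (fun s => (s - c) ^ α) (α * tp (α - 1) (t - c)) t := by
      have h1 : HasDerivAt (fun s : ℝ => s - c) 1 t := (hasDerivAt_id t).sub_const c
      have := (Real.hasDerivAt_rpow_const (x := t - c) (p := α)
        (Or.inl (by linarith : t - c ≠ 0))).comp t h1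
      simpa [tp_of_pos (by linarith : (0:ℝ) < t - c), mul_comm, Function.comp_def] using this
    exact hd.congr_of_eventuallyEq hev

lemma hasDerivAt_term {α y0 yk : ℝ} (t : ℝ) (ht : y0 < t) (h : 1 < α ∨ t ≠ yk) :
    HasDerivAt (fun s => tp α (s - yk) * (s - y0) ^ (-α))
      (α * (t - y0) ^ (-α - 1) * ((yk - y0) * tp (α - 1) (t - yk))) t := by
  have h0 : (0:ℝ) < t - y0 := by linarith
  have hu : HasDerivAt (fun s => tp α (s - yk)) (α * tp (α - 1) (t - yk)) t := by
    rcases h with h | h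
    · exact hasDerivAt_tp h yk t
    · exact hasDerivAt_tp_ne h
  have hv : HasDerivAt (fun s : ℝ => (s - y0) ^ (-α)) ((-α) * (t - y0) ^ (-α - 1)) t := by
    have h1 : HasDerivAt (fun s : ℝ => s - y0) 1 t := (hasDerivAt_id t).sub_const y0
    have := (Real.hasDerivAt_rpow_const (x := t - y0) (p := -α)
      (Or.inl (ne_of_gt h0))).comp t h1
    simpa [mul_comm, Function.comp_def] using this
  have hm := hu.mul hv
  refine hm.congr_deriv ?_
  have e1 : (t - y0) ^ (-α) = (t - y0) ^ (-α - 1) * (t - y0) := by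
    rw [← Real.rpow_add_one (ne_of_gt h0)]; ring_nf
  have e2 : tp α (t - yk) = tp (α - 1) (t - yk) * (t - yk) := tp_succ
  rw [e1, e2]; ring

lemma mclaim : ∀ r : ℕ, ∀ α : ℝ, (r:ℝ) - 2 < α → ∀ x y c : ℕ → ℝ,
    (∀ i j, i < j → j < r → x i < x j) →
    (∀ i j, i < j → j < r → y i < y j) →
    (∀ j, j < r → y j < x j) →
    (∀ j, j < r → ∑ k ∈ Finset.range r, c k * tp α (x j - y k) = 0) →
    ∀ k, k < r → c k = 0 := by
  intro r
  induction r using Nat.strong_induction_on with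
  | _ r IH =>
  intro α hα x y c hx hy hxy hc k hk
  have hr0 : 0 < r := Nat.pos_of_ne_zero (by rintro rfl; omega)
  by_cases hA : ∃ j, j + 1 < r ∧ x j ≤ y (j + 1)
  · -- split case
    obtain ⟨j, hj, hxyj⟩ := hA
    set m := j + 1 with hm_def
    have hm : m < r := hj
    have hmr : (m:ℝ) + 1 ≤ (r:ℝ) := by exact_mod_cast Nat.succ_le_of_lt hm
    have h1 : ∀ k', k' < m → c k' = 0 := by
      apply IH m hm α (by linarith) x y c
        (fun i j' hij hj' => hx i j' hij (hj'.trans hm))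
        (fun i j' hij hj' => hy i j' hij (hj'.trans hm))
        (fun j' hj' => hxy j' (hj'.trans hm))
      intro i hi
      have htot := hc i (hi.trans hm)
      rw [← Finset.sum_range_add_sum_Ico _ hm.le] at htot
      have hz : ∑ k' ∈ Finset.Ico m r, c k' * tp α (x i - y k') = 0 := by
        apply Finset.sum_eq_zero
        intro k' hk'
        rw [Finset.mem_Ico] at hk'
        have hxx : x i ≤ x j := by
          rcases Nat.lt_succ_iff_lt_or_eq.1 hi with h | h
          · exact le_of_lt (hx i j h (by omega))
          · rw [h]
        have hyy : y m ≤ y k' := by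
          rcases eq_or_lt_of_le hk'.1 with h | h
          · rw [h]
          · exact le_of_lt (hy m k' h hk'.2)
        rw [tp_of_nonpos (by linarith), mul_zero]
      linarith [htot, hz]
    have h2 : ∀ i', i' < r - m → c (m + i') = 0 := by
      have hcast : ((r - m : ℕ):ℝ) = (r:ℝ) - m := by
        rw [Nat.cast_sub hm.le]
      apply IH (r - m) (by omega) α (by rw [hcast]; linarith)
        (fun i => x (m + i)) (fun i => y (m + i)) (fun i => c (m + i))
        (fun i j' hij hj' => hx (m + i) (m + j') (by omega) (by omega))
        (fun i j' hij hj' => hy (m + i) (m + j') (by omega) (by omega))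
        (fun j' hj' => hxy (m + j') (by omega))
      intro i hi
      have htot := hc (m + i) (by omega)
      rw [← Finset.sum_range_add_sum_Ico _ hm.le] at htot
      have hz : ∑ k' ∈ Finset.range m, c k' * tp α (x (m + i) - y k') = 0 :=
        Finset.sum_eq_zero fun k' hk' => by
          rw [h1 k' (Finset.mem_range.1 hk'), zero_mul]
      have hIco : ∑ k' ∈ Finset.Ico m r, c k' * tp α (x (m + i) - y k') = 0 := by
        linarith [htot, hz]
      rwa [Finset.sum_Ico_eq_sum_range] at hIco
    rcases lt_or_ge k m with h | h
    · exact h1 k h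
    · have : k = m + (k - m) := by omega
      rw [this]; exact h2 (k - m) (by omega)
  · -- no-split case
    push_neg at hA
    rcases Nat.lt_or_ge r 2 with hr2 | hr2
    · -- r = 1
      have hr1 : r = 1 := by omega
      subst hr1
      have := hc 0 (by omega)
      simp only [Finset.sum_range_one] at this
      have hpos := tp_pos (by linarith [hxy 0 (by omega)] : (0:ℝ) < x 0 - y 0) α
      have hk0 : k = 0 := by omega
      rw [hk0]
      exact by
        rcases mul_eq_zero.1 this with h | h
        · exact h
        · exact absurd h (ne_of_gt hpos)
    · -- r ≥ 2
      obtain ⟨s, rfl⟩ : ∃ s, r = s + 1 := ⟨r - 1, by omega⟩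
      have hα0 : (0:ℝ) < α := by
        have : (2:ℝ) ≤ (s:ℝ) + 1 := by exact_mod_cast hr2
        push_cast at hα; linarith
      set F : ℝ → ℝ := fun t =>
        ∑ k' ∈ Finset.range (s+1), c k' * tp α (t - y k') * (t - y 0) ^ (-α) with hF
      set G : ℝ → ℝ := fun t =>
        ∑ k' ∈ Finset.range (s+1), c k' * ((y k' - y 0) * tp (α - 1) (t - y k')) with hG
      have hder : ∀ t, y 0 < t → (1 < α ∨ ∀ k', k' < s + 1 → t ≠ y k') →
          HasDerivAt F (α * (t - y 0) ^ (-α - 1) * G t) t := by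
        intro t ht hcond
        have : HasDerivAt F (∑ k' ∈ Finset.range (s+1),
            c k' * (α * (t - y 0) ^ (-α - 1) * ((y k' - y 0) * tp (α - 1) (t - y k')))) t := by
          apply HasDerivAt.fun_sum
          intro k' hk'
          have hck : 1 < α ∨ t ≠ y k' := by
            rcases hcond with h | h
            · exact Or.inl h
            · exact Or.inr (h k' (Finset.mem_range.1 hk'))
          have := (hasDerivAt_term t ht hck).const_mul (c k')
          simpa [mul_assoc] using this
        convert this using 1
        rw [hG, Finset.mul_sum]
        apply Finset.sum_congr rfl
        intro k' _
        ring
      have hF0 : ∀ j', j' < s + 1 → F (x j') = 0 := by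
        intro j' hj'
        rw [hF]
        simp only
        rw [← Finset.sum_mul, hc j' hj', zero_mul]
      have hy0x : ∀ i, i < s + 1 → y 0 < x i := by
        intro i hi
        have : y 0 ≤ y i := by
          rcases Nat.eq_zero_or_pos i with h | h
          · rw [h]
          · exact le_of_lt (hy 0 i h hi)
        linarith [hxy i hi]
      have hxi : ∀ i, i + 1 < s + 1 → ∃ ξ, x i < ξ ∧ ξ < x (i+1) ∧ G ξ = 0 := by
        intro i hi
        have hab : x i < x (i + 1) := hx i (i+1) (by omega) hi
        have hcond : ∀ t ∈ Set.Icc (x i) (x (i+1)),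
            y 0 < t ∧ (1 < α ∨ ∀ k', k' < s + 1 → t ≠ y k') := by
          intro t htt
          have hy0t : y 0 < t := lt_of_lt_of_le (hy0x i (by omega)) htt.1
          refine ⟨hy0t, ?_⟩
          rcases Nat.lt_or_ge s 2 with hs2 | hs2
          · -- s = 1, r = 2, i = 0
            have hs1 : s = 1 := by omega
            have hi0 : i = 0 := by omega
            right
            intro k' hk' heq
            have hyk : y k' < x 0 := by
              rcases Nat.eq_zero_or_pos k' with h | h
              · rw [h]; exact hy0x 0 (by omega)
              · have hk1 : k' = 1 := by omega
                rw [hk1]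
                exact hA 0 (by omega)
            rw [heq, hi0] at htt
            linarith [htt.1]
          · -- r ≥ 3 so α > 1
            left
            have : (3:ℝ) ≤ (s:ℝ) + 1 := by exact_mod_cast (by omega : 3 ≤ s + 1)
            push_cast at hα
            linarith
        have hRolle := exists_hasDerivAt_eq_zero (f := F)
          (f' := fun t => α * (t - y 0) ^ (-α - 1) * G t) hab
          (fun t htt => ((hder t (hcond t htt).1 (hcond t htt).2).continuousAt).continuousWithinAt)
          (by rw [hF0 i (by omega), hF0 (i+1) hi])
          (fun t htt => hder t (hcond t (Set.mem_Icc_of_Ioo htt)).1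
            (hcond t (Set.mem_Icc_of_Ioo htt)).2)
        obtain ⟨ξ, hmem, hval⟩ := hRolle
        refine ⟨ξ, hmem.1, hmem.2, ?_⟩
        have hpow : (0:ℝ) < (ξ - y 0) ^ (-α - 1) :=
          Real.rpow_pos_of_pos (by linarith [(hcond ξ (Set.mem_Icc_of_Ioo hmem)).1]) _
        have := hval
        rcases mul_eq_zero.1 this with h | h
        · rcases mul_eq_zero.1 h with h' | h'
          · exact absurd h' (ne_of_gt hα0)
          · exact absurd h' (ne_of_gt hpow)
        · exact h
      have hxi' : ∀ i, ∃ ξ, i + 1 < s + 1 → (x i < ξ ∧ ξ < x (i+1) ∧ G ξ = 0) := by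
        intro i
        by_cases hi : i + 1 < s + 1
        · obtain ⟨ξ, h1', h2', h3'⟩ := hxi i hi
          exact ⟨ξ, fun _ => ⟨h1', h2', h3'⟩⟩
        · exact ⟨0, fun h => absurd h hi⟩
      choose ξ hξ using hxi'
      have hcs : ∀ k', k' < s → c (k' + 1) * (y (k' + 1) - y 0) = 0 := by
        have hcast : ((s:ℝ)) - 2 < α - 1 := by push_cast at hα ⊢; linarith
        apply IH s (by omega) (α - 1) hcast ξ (fun k' => y (k' + 1))
          (fun k' => c (k' + 1) * (y (k' + 1) - y 0))
        · intro i j' hij hj'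
          have h1' := hξ i (by omega)
          have h2' := hξ j' (by omega)
          have : x (i+1) ≤ x j' := by
            rcases eq_or_lt_of_le (by omega : i + 1 ≤ j') with h | h
            · rw [h]
            · exact le_of_lt (hx (i+1) j' h (by omega))
          linarith [h1'.2.1, h2'.1]
        · intro i j' hij hj'
          exact hy (i+1) (j'+1) (by omega) (by omega)
        · intro j' hj'
          have h1' := hξ j' (by omega)
          have h2' := hA j' (by omega)
          linarith [h1'.1]
        · intro j' hj'
          have h1' := hξ j' (by omega)
          have hGz := h1'.2.2
          simp only [hG] at hGz
          rw [Finset.sum_range_succ'] at hGz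
          simp only [sub_self, zero_mul, mul_zero, add_zero] at hGz
          convert hGz using 2 with k' hk'
          ring
      have hc1 : ∀ k', k' < s → c (k' + 1) = 0 := by
        intro k' hk'
        have := hcs k' hk'
        rcases mul_eq_zero.1 this with h | h
        · exact h
        · have : y 0 < y (k' + 1) := hy 0 (k'+1) (by omega) (by omega)
          linarith [sub_eq_zero.1 h]
      have hc0 : c 0 = 0 := by
        have := hc 0 (by omega)
        rw [Finset.sum_range_succ'] at this
        have hz : ∑ k' ∈ Finset.range s, c (k' + 1) * tp α (x 0 - y (k' + 1)) = 0 :=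
          Finset.sum_eq_zero fun k' hk' => by
            rw [hc1 k' (Finset.mem_range.1 hk'), zero_mul]
        rw [hz, zero_add] at this
        have hpos := tp_pos (by linarith [hxy 0 (by omega)] : (0:ℝ) < x 0 - y 0) α
        rcases mul_eq_zero.1 this with h | h
        · exact h
        · exact absurd h (ne_of_gt hpos)
      rcases Nat.eq_zero_or_pos k with h | h
      · rw [h]; exact hc0
      · obtain ⟨k', rfl⟩ : ∃ k'', k = k'' + 1 := ⟨k - 1, by omega⟩
        exact hc1 k' (by omega)

lemma det_zero_of_corner {r : ℕ} (M : Matrix (Fin r) (Fin r) ℝ) (j0 : Fin r)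
    (h : ∀ i k : Fin r, i ≤ j0 → j0 ≤ k → M i k = 0) : M.det = 0 := by
  rw [Matrix.det_apply']
  apply Finset.sum_eq_zero
  intro σ _
  have hex : ∃ i : Fin r, j0 ≤ i ∧ σ i ≤ j0 := by
    by_contra hcon
    push_neg at hcon
    have hsub : ∀ i ∈ Finset.Ici j0, σ i ∈ Finset.Ioi j0 := fun i hi =>
      Finset.mem_Ioi.2 (hcon i (Finset.mem_Ici.1 hi))
    have hcard := Finset.card_le_card_of_injOn σ hsub σ.injective.injOn
    rw [Fin.card_Ici, Fin.card_Ioi] at hcard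
    have := j0.isLt
    omega
  obtain ⟨i, h1, h2⟩ := hex
  exact mul_eq_zero_of_right _ (Finset.prod_eq_zero (Finset.mem_univ i) (h (σ i) i h2 h1))

lemma det_ne_zero_on_U {r : ℕ} (α : ℝ) (hα : (r:ℝ) - 2 < α)
    (x y : Fin r → ℝ) (hx : StrictMono x) (hy : StrictMono y) (hxy : ∀ j, y j < x j) :
    (Matrix.of fun j k : Fin r => tp α (x j - y k)).det ≠ 0 := by
  intro h0
  obtain ⟨v, hv, hMv⟩ := (Matrix.exists_mulVec_eq_zero_iff).2 h0
  apply hv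
  set X : ℕ → ℝ := fun i => if h : i < r then x ⟨i, h⟩ else 0 with hX
  set Y : ℕ → ℝ := fun i => if h : i < r then y ⟨i, h⟩ else 0 with hY
  set C : ℕ → ℝ := fun i => if h : i < r then v ⟨i, h⟩ else 0 with hC
  have key : ∀ k, k < r → C k = 0 := by
    apply mclaim r α hα X Y C
    · intro i j hij hj
      have hi : i < r := hij.trans hj
      simp only [hX, dif_pos hi, dif_pos hj]
      exact hx (show (⟨i, hi⟩ : Fin r) < ⟨j, hj⟩ from hij)
    · intro i j hij hj
      have hi : i < r := hij.trans hj
      simp only [hY, dif_pos hi, dif_pos hj]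
      exact hy (show (⟨i, hi⟩ : Fin r) < ⟨j, hj⟩ from hij)
    · intro j hj
      simp only [hX, hY, dif_pos hj]
      exact hxy _
    · intro j hj
      have := congrFun hMv ⟨j, hj⟩
      simp only [Matrix.mulVec, dotProduct, Pi.zero_apply] at this
      rw [Finset.sum_range fun k => C k * tp α (X j - Y k)]
      rw [← this]
      apply Finset.sum_congr rfl
      intro k _
      simp only [hX, hY, hC, dif_pos hj, dif_pos k.isLt, Matrix.of_apply]
      rw [mul_comm]
  funext k
  have := key k k.isLt
  simpa [hC, dif_pos k.isLt] using this

lemma anchor_pos {r : ℕ} (α : ℝ) :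
    0 < (Matrix.of fun j k : Fin r =>
      tp α (((j:ℕ):ℝ) + 1/2 - ((k:ℕ):ℝ))).det := by
  have htri : (Matrix.of fun j k : Fin r =>
      tp α (((j:ℕ):ℝ) + 1/2 - ((k:ℕ):ℝ))).BlockTriangular OrderDual.toDual := by
    intro i j hij
    have : (i:ℕ) < (j:ℕ) := hij
    have : ((i:ℕ):ℝ) + 1 ≤ ((j:ℕ):ℝ) := by exact_mod_cast this
    simp only [Matrix.of_apply]
    exact tp_of_nonpos (by linarith) α
  rw [Matrix.det_of_lowerTriangular _ htri]
  apply Finset.prod_pos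
  intro i _
  simp only [Matrix.of_apply]
  exact tp_pos (by norm_num) α

lemma core_real {r : ℕ} (hr : 0 < r) (α : ℝ) (hα : (r:ℝ) - 2 < α) (hα0 : 0 ≤ α)
    (x y : Fin r → ℝ) (hx : StrictMono x) (hy : StrictMono y) :
    0 ≤ (Matrix.of fun j k : Fin r => tp α (x j - y k)).det := by
  by_cases hU : ∀ j, y j < x j
  · -- on U : strictly positive via path from anchor
    rcases Nat.lt_or_ge r 2 with hr1 | hr2
    · -- r = 1
      obtain rfl : r = 1 := by omega
      rw [show (Matrix.of fun j k : Fin 1 => tp α (x j - y k)).det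
          = tp α (x 0 - y 0) from Matrix.det_fin_one _]
      exact tp_nonneg _ _
    · have hαpos : 0 < α := by
        have : (2:ℝ) ≤ (r:ℝ) := by exact_mod_cast hr2
        by_contra hcon
        push_neg at hcon
        linarith
      set x0 : Fin r → ℝ := fun j => ((j:ℕ):ℝ) + 1/2 with hx0
      set y0 : Fin r → ℝ := fun k => ((k:ℕ):ℝ) with hy0
      set xt : ℝ → Fin r → ℝ := fun t j => (1 - t) * x0 j + t * x j with hxt
      set yt : ℝ → Fin r → ℝ := fun t k => (1 - t) * y0 k + t * y k with hyt
      set g : ℝ → ℝ := fun t =>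
        (Matrix.of fun j k : Fin r => tp α (xt t j - yt t k)).det with hg
      have hprops : ∀ t ∈ Set.Icc (0:ℝ) 1,
          StrictMono (xt t) ∧ StrictMono (yt t) ∧ ∀ j, yt t j < xt t j := by
        intro t ht
        obtain ⟨ht0, ht1⟩ := ht
        have hconv : ∀ a b : ℝ, 0 < a → 0 < b → 0 < (1 - t) * a + t * b := by
          intro a b ha hb
          rcases eq_or_lt_of_le ht0 with h | h
          · rw [← h]; simpa using ha
          · nlinarith
        refine ⟨?_, ?_, ?_⟩
        · intro i j hij
          have h1 : x0 i < x0 j := by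
            simp only [hx0]
            have : (i:ℕ) < (j:ℕ) := hij
            have : ((i:ℕ):ℝ) < ((j:ℕ):ℝ) := by exact_mod_cast this
            linarith
          have h2 := hx hij
          simp only [hxt]
          nlinarith [hconv (x0 j - x0 i) (x j - x i) (by linarith) (by linarith)]
        · intro i j hij
          have h1 : y0 i < y0 j := by
            simp only [hy0]
            have : (i:ℕ) < (j:ℕ) := hij
            have : ((i:ℕ):ℝ) < ((j:ℕ):ℝ) := by exact_mod_cast this
            linarith
          have h2 := hy hij
          simp only [hyt]
          nlinarith [hconv (y0 j - y0 i) (y j - y i) (by linarith) (by linarith)]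
        · intro j
          have h1 : y0 j < x0 j := by simp only [hx0, hy0]; norm_num
          have h2 := hU j
          simp only [hxt, hyt]
          nlinarith [hconv (x0 j - y0 j) (x j - y j) (by linarith) (by linarith)]
      have hgcont : Continuous g := by
        apply Continuous.matrix_det
        apply continuous_matrix
        intro j k
        apply (continuous_tp hαpos).comp
        simp only [hxt, hyt]
        fun_prop
      have hgne : ∀ t ∈ Set.Icc (0:ℝ) 1, g t ≠ 0 := by
        intro t ht
        obtain ⟨h1, h2, h3⟩ := hprops t ht
        exact det_ne_zero_on_U α hα _ _ h1 h2 h3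
      have hg0 : 0 < g 0 := by
        have : g 0 = (Matrix.of fun j k : Fin r =>
            tp α (((j:ℕ):ℝ) + 1/2 - ((k:ℕ):ℝ))).det := by
          simp only [hg, hxt, hyt, hx0, hy0]
          norm_num
        rw [this]
        exact anchor_pos α
      by_contra hcon
      push_neg at hcon
      have hg1 : g 1 < 0 := by
        have : g 1 = (Matrix.of fun j k : Fin r => tp α (x j - y k)).det := by
          simp only [hg, hxt, hyt]
          norm_num
        rw [this]
        exact hcon
      have hIVT := intermediate_value_Icc' (by norm_num : (0:ℝ) ≤ 1) hgcont.continuousOn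
      have h0mem : (0:ℝ) ∈ Set.Icc (g 1) (g 0) := ⟨hg1.le, hg0.le⟩
      obtain ⟨t, ht, hgt⟩ := hIVT h0mem
      exact hgne t ht hgt
  · -- some x j ≤ y j : determinant vanishes
    push_neg at hU
    obtain ⟨j0, hj0⟩ := hU
    apply le_of_eq
    symm
    apply det_zero_of_corner _ j0
    intro i k hi hk
    have h1 : x i ≤ x j0 := hx.monotone hi
    have h2 : y j0 ≤ y k := hy.monotone hk
    simp only [Matrix.of_apply]
    exact tp_of_nonpos (by linarith) α

theorem cauchy_binet {r N : ℕ} (A : Matrix (Fin r) (Fin N) ℝ) (B : Matrix (Fin N) (Fin r) ℝ) :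
    (A * B).det = ∑ g ∈ Finset.univ.filter (fun g : Fin r → Fin N => StrictMono g),
      (A.submatrix id g).det * (B.submatrix g id).det := by
  classical
  have hrow : ∀ f : Fin r → Fin N,
      Matrix.detRowAlternating (fun i => B (f i)) = (B.submatrix f id).det := by
    intro f
    rfl
  have step1 : (A * B).det
      = ∑ f : Fin r → Fin N, (∏ i, A i (f i)) * (B.submatrix f id).det := by
    have h1 : (A * B).det = Matrix.detRowAlternating (fun i => ∑ j : Fin N, A i j • B j) := by
      show Matrix.detRowAlternating (A * B) = _
      congr 1
      funext i k
      simp [Matrix.mul_apply, Finset.sum_apply]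
    rw [h1]
    have h2 := MultilinearMap.map_sum
      (f := (Matrix.detRowAlternating (R := ℝ) (n := Fin r)).toMultilinearMap)
      (g := fun (i : Fin r) (j : Fin N) => A i j • B j)
    simp only [AlternatingMap.coe_multilinearMap] at h2
    rw [h2]
    apply Finset.sum_congr rfl
    intro f _
    have h3 := MultilinearMap.map_smul_univ
      (f := (Matrix.detRowAlternating (R := ℝ) (n := Fin r)).toMultilinearMap)
      (fun i => A i (f i)) (fun i => B (f i))
    simp only [AlternatingMap.coe_multilinearMap] at h3
    rw [h3, hrow f, smul_eq_mul]
  rw [step1]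
  rw [← Finset.sum_filter_add_sum_filter_not Finset.univ
    (fun f : Fin r → Fin N => Function.Injective f)]
  have hnoninj : ∑ f ∈ Finset.univ.filter
      (fun f : Fin r → Fin N => ¬ Function.Injective f),
      (∏ i, A i (f i)) * (B.submatrix f id).det = 0 := by
    apply Finset.sum_eq_zero
    intro f hf
    rw [Finset.mem_filter] at hf
    obtain ⟨i, j, hij, hne⟩ : ∃ i j, f i = f j ∧ i ≠ j := by
      have := hf.2
      simp only [Function.Injective, not_forall] at this
      obtain ⟨i, j, h1, h2⟩ := this
      exact ⟨i, j, h1, h2⟩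
    have : (B.submatrix f id).det = 0 := by
      rw [← hrow f]
      exact AlternatingMap.map_eq_zero_of_eq _ _ (by rw [hij]) hne
    rw [this, mul_zero]
  rw [hnoninj, add_zero]
  -- reindex injective functions by (monotone g, permutation σ)
  have hbij : ∑ f ∈ Finset.univ.filter (fun f : Fin r → Fin N => Function.Injective f),
      (∏ i, A i (f i)) * (B.submatrix f id).det
      = ∑ p ∈ (Finset.univ.filter (fun g : Fin r → Fin N => StrictMono g)) ×ˢ
          (Finset.univ : Finset (Equiv.Perm (Fin r))),
        (∏ i, A i (p.1 (p.2 i))) * (B.submatrix (p.1 ∘ p.2) id).det := by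
    apply Finset.sum_nbij' (i := fun f => (f ∘ ⇑(Tuple.sort f), (Tuple.sort f)⁻¹))
      (j := fun p => p.1 ∘ ⇑p.2)
    · intro f hf
      rw [Finset.mem_filter] at hf
      rw [Finset.mem_product, Finset.mem_filter]
      refine ⟨⟨Finset.mem_univ _, ?_⟩, Finset.mem_univ _⟩
      exact (Tuple.monotone_sort f).strictMono_of_injective
        (hf.2.comp (Tuple.sort f).injective)
    · intro p hp
      rw [Finset.mem_product, Finset.mem_filter] at hp
      rw [Finset.mem_filter]
      exact ⟨Finset.mem_univ _, hp.1.2.injective.comp p.2.injective⟩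
    · intro f hf
      rw [Finset.mem_filter] at hf
      funext i
      simp
    · intro p hp
      rw [Finset.mem_product, Finset.mem_filter] at hp
      have hg : StrictMono p.1 := hp.1.2
      have hmono : Monotone ((p.1 ∘ ⇑p.2) ∘ ⇑(p.2⁻¹)) := by
        have h5 : (p.1 ∘ ⇑p.2) ∘ ⇑(p.2⁻¹) = p.1 := by
          funext i; simp
        rw [h5]; exact hg.monotone
      have hsort : (p.1 ∘ ⇑p.2) ∘ ⇑(Tuple.sort (p.1 ∘ ⇑p.2)) = (p.1 ∘ ⇑p.2) ∘ ⇑(p.2⁻¹) :=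
        ((Tuple.comp_sort_eq_comp_iff_monotone (σ := p.2⁻¹)).2 hmono).symm
      have hinj : Function.Injective (p.1 ∘ ⇑p.2) :=
        hg.injective.comp p.2.injective
      have hperm : Tuple.sort (p.1 ∘ ⇑p.2) = p.2⁻¹ := by
        apply Equiv.ext
        intro i
        apply hinj
        have := congrFun hsort i
        simpa using this
      have hfst : (p.1 ∘ ⇑p.2) ∘ ⇑(Tuple.sort (p.1 ∘ ⇑p.2)) = p.1 := by
        rw [hsort]; funext i; simp
      rw [Prod.ext_iff]
      constructor
      · exact hfst
      · rw [hperm]; simp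
    · intro f hf
      rw [Finset.mem_filter] at hf
      have h1 : ∀ i, (f ∘ ⇑(Tuple.sort f)) ((Tuple.sort f)⁻¹ i) = f i := by
        intro i; simp
      have h2 : (f ∘ ⇑(Tuple.sort f)) ∘ ⇑((Tuple.sort f)⁻¹) = f := funext h1
      simp only [h2]
      congr 1
      exact (Finset.prod_congr rfl fun i _ => by rw [h1 i]).symm
  rw [hbij, Finset.sum_product]
  apply Finset.sum_congr rfl
  intro g hg
  rw [Finset.mem_filter] at hg
  have hdetg : ∀ σ : Equiv.Perm (Fin r),
      (B.submatrix (g ∘ σ) id).det = (Equiv.Perm.sign σ : ℝ) * (B.submatrix g id).det := by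
    intro σ
    have : B.submatrix (g ∘ σ) id = (B.submatrix g id).submatrix σ id := by
      rw [Matrix.submatrix_submatrix]
      rfl
    rw [this, Matrix.det_permute]
  have hA : (A.submatrix id g).det = ∑ σ : Equiv.Perm (Fin r),
      (Equiv.Perm.sign σ : ℝ) * ∏ i, A i (g (σ i)) := by
    rw [← Matrix.det_transpose, Matrix.det_apply']
    apply Finset.sum_congr rfl
    intro σ _
    congr 1
  rw [hA, Finset.sum_mul]
  apply Finset.sum_congr rfl
  intro σ _
  rw [hdetg σ]
  ring

lemma heaviside_det_nonneg {r : ℕ} (a t : Fin r → ℤ) (ha : StrictMono a) (ht : StrictMono t) :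
    0 ≤ (Matrix.of fun j i : Fin r => if t i < a j then (1:ℝ) else 0).det := by
  classical
  rcases Nat.eq_zero_or_pos r with hr | hr
  · subst hr
    simp [Matrix.det_fin_zero]
  set S : Fin r → Finset (Fin r) := fun j => Finset.univ.filter fun i => t i < a j with hS
  have hmem : ∀ j i, t i < a j ↔ i ∈ S j := by
    intro j i; simp [hS]
  have hsub : ∀ j j' : Fin r, j ≤ j' → S j ⊆ S j' := by
    intro j j' hjj i hi
    rw [← hmem] at hi ⊢
    exact lt_of_lt_of_le hi (ha.monotone hjj)
  by_cases hstrict : ∀ j j' : Fin r, j < j' → (S j).card < (S j').card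
  · -- strictly increasing cards
    set z0 : Fin r := ⟨0, hr⟩ with hz0
    by_cases h0 : (S z0).card = 0
    · -- first row is zero
      apply le_of_eq
      symm
      apply Matrix.det_eq_zero_of_row_eq_zero z0
      intro i
      simp only [Matrix.of_apply, ite_eq_right_iff]
      intro hlt
      rw [hmem] at hlt
      have := Finset.card_eq_zero.1 h0
      rw [this] at hlt
      exact absurd hlt (Finset.notMem_empty i)
    · -- cards are exactly j+1 ; matrix is lower triangular with unit diagonal
      have hlow : ∀ m, ∀ hm : m < r, m + 1 ≤ (S ⟨m, hm⟩).card := by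
        intro m
        induction m with
        | zero =>
          intro hm
          have he : (⟨0, hm⟩ : Fin r) = z0 := by rw [hz0]
          rw [he]
          omega
        | succ p ih =>
          intro hm
          have hp : p < r := by omega
          have h1 := ih hp
          have h2 := hstrict ⟨p, hp⟩ ⟨p+1, hm⟩ (by rw [Fin.mk_lt_mk]; omega)
          omega
      have hup : ∀ m, ∀ hm : m < r, (S ⟨m, hm⟩).card ≤ m + 1 := by
        -- descending: prove  card (S ⟨r-1-m⟩) ≤ r - m  by induction on m
        have key : ∀ m, m < r → ∀ hm' : r - 1 - m < r, (S ⟨r - 1 - m, hm'⟩).card ≤ r - m := by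
          intro m
          induction m with
          | zero =>
            intro _ hm'
            calc (S ⟨r - 1 - 0, hm'⟩).card ≤ Fintype.card (Fin r) := Finset.card_le_univ _
            _ = r := by simp
            _ = r - 0 := by omega
          | succ p ih =>
            intro hp hm'
            have hpr : p < r := by omega
            have hm'' : r - 1 - p < r := by omega
            have h1 := ih (by omega) hm''
            have h2 := hstrict ⟨r - 1 - (p+1), hm'⟩ ⟨r - 1 - p, hm''⟩ (by rw [Fin.mk_lt_mk]; omega)
            omega
        intro m hm
        have hm' : r - 1 - (r - 1 - m) < r := by omega
        have h3 := key (r - 1 - m) (by omega) hm'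
        have h4 : (⟨r - 1 - (r - 1 - m), hm'⟩ : Fin r) = ⟨m, hm⟩ := by simp only [Fin.mk.injEq]; omega
        rw [h4] at h3
        omega
      have hcard : ∀ j : Fin r, (S j).card = j.val + 1 := by
        intro j
        have h1 := hlow j.val j.isLt
        have h2 := hup j.val j.isLt
        have : (⟨j.val, j.isLt⟩ : Fin r) = j := by ext; rfl
        rw [this] at h1 h2
        omega
      have hchar : ∀ j i : Fin r, (t i < a j ↔ i.val ≤ j.val) := by
        intro j i
        rw [hmem]
        constructor
        · intro hi
          by_contra hcon
          push_neg at hcon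
          -- Iic i ⊆ S j would give card ≥ i+1 > j+1
          have hsub2 : Finset.Iic i ⊆ S j := by
            intro i' hi'
            rw [Finset.mem_Iic] at hi'
            rw [← hmem]
            calc t i' ≤ t i := ht.monotone hi'
            _ < a j := (hmem j i).2 hi
          have := Finset.card_le_card hsub2
          rw [Fin.card_Iic, hcard] at this
          omega
        · intro hij
          by_contra hcon
          -- S j ⊆ Iio i gives card ≤ i ≤ j : contradiction with card = j+1
          have hsub2 : S j ⊆ Finset.Iio i := by
            intro i' hi'
            rw [Finset.mem_Iio]
            by_contra hge
            push_neg at hge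
            apply hcon
            rw [← hmem] at hi' ⊢
            exact lt_of_le_of_lt (ht.monotone hge) hi'
          have := Finset.card_le_card hsub2
          rw [Fin.card_Iio, hcard] at this
          omega
      -- lower triangular with ones on the diagonal
      have htri : (Matrix.of fun j i : Fin r => if t i < a j then (1:ℝ) else 0).BlockTriangular
          OrderDual.toDual := by
        intro j i hij
        have : (j:ℕ) < (i:ℕ) := hij
        simp only [Matrix.of_apply, ite_eq_right_iff]
        intro hlt
        rw [hchar] at hlt
        omega
      rw [Matrix.det_of_lowerTriangular _ htri]
      apply le_of_lt
      apply Finset.prod_pos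
      intro i _
      simp only [Matrix.of_apply]
      rw [if_pos ((hchar i i).2 le_rfl)]
      norm_num
  · -- two rows coincide
    push_neg at hstrict
    obtain ⟨j, j', hjj, hcard⟩ := hstrict
    have heq : S j = S j' := Finset.eq_of_subset_of_card_le (hsub j j' hjj.le) hcard
    apply le_of_eq
    symm
    apply Matrix.det_zero_of_row_eq (ne_of_lt hjj)
    funext i
    simp only [Matrix.of_apply]
    exact if_congr (by rw [hmem, hmem, heq]) rfl rfl

noncomputable def kk (m : ℕ) (a b : ℤ) : ℝ :=
  if b < a then ((a - b - 1).toNat.choose m : ℝ) else 0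

lemma kk_nonneg (m : ℕ) (a b : ℤ) : 0 ≤ kk m a b := by
  unfold kk; split
  · positivity
  · exact le_refl 0

lemma kk_pascal (m : ℕ) (a b : ℤ) (hab : b < a) :
    kk (m+1) a b = kk (m+1) (a-1) b + kk m (a-1) b := by
  unfold kk
  rcases lt_trichotomy b (a-1) with h | h | h
  · rw [if_pos hab, if_pos h, if_pos h]
    have hu : (a - b - 1).toNat = (a - 1 - b - 1).toNat + 1 := by omega
    rw [hu, Nat.choose_succ_succ]
    push_cast
    ring
  · rw [if_pos hab, if_neg (by omega), if_neg (by omega)]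
    have hu : (a - b - 1).toNat = 0 := by omega
    rw [hu, Nat.choose_eq_zero_of_lt (by omega)]
    norm_num
  · omega

lemma kk_comp (m : ℕ) (L : ℤ) (N : ℕ) : ∀ a b : ℤ, L ≤ b → a ≤ L + N →
    kk (m+1) a b = ∑ i : Fin N, (if (L + (i:ℕ) : ℤ) < a then (1:ℝ) else 0) * kk m (L + (i:ℕ)) b := by
  induction N with
  | zero =>
    intro a b hL hN
    simp only [Finset.univ_eq_empty, Finset.sum_empty]
    unfold kk
    rw [if_neg (by omega)]
  | succ N ih =>
    intro a b hL hN
    rw [Fin.sum_univ_castSucc]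
    simp only [Fin.coe_castSucc, Fin.val_last]
    rcases le_or_gt a (L + N) with hle | hlt
    · rw [← ih a b hL hle, if_neg (by omega), zero_mul, add_zero]
    · have ha : a = L + N + 1 := by omega
      rcases le_or_gt a b with hab | hab
      · -- a ≤ b : everything vanishes
        have hLHS : kk (m+1) a b = 0 := by unfold kk; rw [if_neg (by omega)]
        have hlast : kk m (L + (N:ℕ)) b = 0 := by unfold kk; rw [if_neg (by omega)]
        have hsum : ∑ i : Fin N, (if (L + (i:ℕ) : ℤ) < a then (1:ℝ) else 0)
            * kk m (L + (i:ℕ)) b = 0 := by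
          apply Finset.sum_eq_zero
          intro i _
          have hi := i.isLt
          have : kk m (L + (i:ℕ)) b = 0 := by unfold kk; rw [if_neg (by omega)]
          rw [this, mul_zero]
        rw [hLHS, hsum, hlast, mul_zero, add_zero]
      · rw [if_pos (by omega), one_mul]
        have h1 : kk (m+1) a b = kk (m+1) (a-1) b + kk m (a-1) b := kk_pascal m a b hab
        have h2 : kk (m+1) (a-1) b = ∑ i : Fin N,
            (if (L + (i:ℕ) : ℤ) < a - 1 then (1:ℝ) else 0) * kk m (L + (i:ℕ)) b :=
          ih (a-1) b hL (by omega)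
        rw [h1, h2]
        have h3 : (L + (N:ℤ)) = a - 1 := by omega
        rw [h3]
        congr 1
        apply Finset.sum_congr rfl
        intro i _
        have : ((L + (i:ℕ) : ℤ) < a - 1) ↔ ((L + (i:ℕ) : ℤ) < a) := by
          constructor
          · intro h'; omega
          · intro h'
            have hi := i.isLt
            omega
        rw [if_congr this rfl rfl]

lemma dtn (m : ℕ) : ∀ r : ℕ, ∀ a b : Fin r → ℤ, StrictMono a → StrictMono b →
    0 ≤ (Matrix.of fun j k => kk m (a j) (b k)).det := by
  induction m with
  | zero =>
    intro r a b ha hb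
    have : (Matrix.of fun j k => kk 0 (a j) (b k))
        = Matrix.of fun j k : Fin r => if b k < a j then (1:ℝ) else 0 := by
      ext j k
      simp only [Matrix.of_apply]
      unfold kk
      split <;> simp
    rw [this]
    exact heaviside_det_nonneg a b ha hb
  | succ m ih =>
    intro r a b ha hb
    rcases Nat.eq_zero_or_pos r with hr | hr
    · subst hr
      simp [Matrix.det_fin_zero]
    have hr0 : Fin r := ⟨0, hr⟩
    set L : ℤ := b ⟨0, hr⟩ with hL
    set amax : ℤ := a ⟨r - 1, by omega⟩ with hamax
    set N : ℕ := (amax - L + 1).toNat with hN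
    have hLb : ∀ k : Fin r, L ≤ b k := by
      intro k
      rcases Nat.eq_zero_or_pos k.val with h | h
      · have : k = ⟨0, hr⟩ := Fin.ext (by simp only [Fin.val_mk]; omega)
        rw [this]
      · exact le_of_lt (hb (show (⟨0, hr⟩ : Fin r) < k from h))
    have haN : ∀ j : Fin r, a j ≤ L + N := by
      intro j
      have h1 : a j ≤ amax := by
        rcases Nat.lt_or_ge j.val (r-1) with h | h
        · exact le_of_lt (ha (show j < (⟨r - 1, by omega⟩ : Fin r) from h))
        · have : j = ⟨r - 1, by omega⟩ := Fin.ext (by simp only [Fin.val_mk]; omega)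
          rw [this]
      have h2 : (N:ℤ) = max (amax - L + 1) 0 := Int.toNat_eq_max _
      rcases le_or_gt L amax with h | h
      · have : (N:ℤ) = amax - L + 1 := by rw [h2]; omega
        omega
      · have : (0:ℤ) ≤ N := Int.natCast_nonneg N
        omega
    set A : Matrix (Fin r) (Fin N) ℝ :=
      Matrix.of fun j i => if (L + (i:ℕ) : ℤ) < a j then (1:ℝ) else 0 with hA
    set B : Matrix (Fin N) (Fin r) ℝ :=
      Matrix.of fun i k => kk m (L + (i:ℕ)) (b k) with hB
    have hprod : (Matrix.of fun j k => kk (m+1) (a j) (b k)) = A * B := by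
      ext j k
      rw [Matrix.mul_apply]
      simp only [Matrix.of_apply, hA, hB]
      exact kk_comp m L N (a j) (b k) (hLb k) (haN j)
    rw [hprod, cauchy_binet]
    apply Finset.sum_nonneg
    intro g hg
    rw [Finset.mem_filter] at hg
    have hgmono : StrictMono g := hg.2
    apply mul_nonneg
    · have : A.submatrix id g
          = Matrix.of fun j i : Fin r => if (L + ((g i : Fin N):ℕ) : ℤ) < a j then (1:ℝ) else 0 := by
        ext j i
        simp [hA, Matrix.submatrix_apply]
      rw [this]
      apply heaviside_det_nonneg a (fun i => L + ((g i : Fin N):ℕ) : Fin r → ℤ) ha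
      intro i i' hii
      have h1 : (g i : Fin N) < g i' := hgmono hii
      have h2 : ((g i : Fin N):ℕ) < ((g i' : Fin N):ℕ) := h1
      show (L + ((g i : Fin N):ℕ) : ℤ) < L + ((g i' : Fin N):ℕ)
      omega
    · have : B.submatrix g id
          = Matrix.of fun i k : Fin r => kk m (L + ((g i : Fin N):ℕ)) (b k) := by
        ext i k
        simp [hB, Matrix.submatrix_apply]
      rw [this]
      apply ih r (fun i => L + ((g i : Fin N):ℕ)) b _ hb
      intro i i' hii
      have h1 : (g i : Fin N) < g i' := hgmono hii
      have h2 : ((g i : Fin N):ℕ) < ((g i' : Fin N):ℕ) := h1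
      show (L + ((g i : Fin N):ℕ) : ℤ) < L + ((g i' : Fin N):ℕ)
      omega

lemma floor_div_tendsto (c : ℝ) :
    Tendsto (fun D : ℕ => ((⌊(D:ℝ) * c⌋ : ℤ):ℝ) / D) atTop (𝓝 c) := by
  apply tendsto_of_tendsto_of_tendsto_of_le_of_le'
    (g := fun D : ℕ => c - 1 / (D:ℝ)) (h := fun _ : ℕ => c)
  · simpa using (tendsto_const_nhds (x := c)).sub tendsto_one_div_atTop_nhds_zero_nat
  · exact tendsto_const_nhds
  · filter_upwards [eventually_ge_atTop 1] with D hD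
    have hD0 : (0:ℝ) < D := by exact_mod_cast hD
    rw [sub_le_iff_le_add, ← add_div, le_div_iff₀ hD0]
    have := Int.sub_one_lt_floor ((D:ℝ) * c)
    linarith
  · filter_upwards [eventually_ge_atTop 1] with D hD
    have hD0 : (0:ℝ) < D := by exact_mod_cast hD
    rw [div_le_iff₀ hD0]
    have := Int.floor_le ((D:ℝ) * c)
    linarith [mul_comm c (D:ℝ)]

lemma core_nat (n : ℕ) {r : ℕ} (x y : Fin r → ℝ) (hx : StrictMono x) (hy : StrictMono y) :
    0 ≤ (Matrix.of fun j k : Fin r => tp (n:ℝ) (x j - y k)).det := by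
  set a : ℕ → Fin r → ℤ := fun D j => ⌊(D:ℝ) * x j⌋ with ha
  set b : ℕ → Fin r → ℤ := fun D k => ⌊(D:ℝ) * y k⌋ with hb
  set M : ℕ → Matrix (Fin r) (Fin r) ℝ :=
    fun D => (((Nat.factorial n) : ℝ) / (D:ℝ)^n) • (Matrix.of fun j k => kk n (a D j) (b D k)) with hM
  have hmono : ∀ᶠ D : ℕ in atTop,
      ∀ p : Fin r × Fin r, p.1 < p.2 → a D p.1 < a D p.2 ∧ b D p.1 < b D p.2 := by
    rw [Filter.eventually_all]
    intro p
    by_cases hp : p.1 < p.2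
    · have hgx : 0 < x p.2 - x p.1 := by linarith [hx hp]
      have hgy : 0 < y p.2 - y p.1 := by linarith [hy hp]
      have hgap : (0:ℝ) < min (x p.2 - x p.1) (y p.2 - y p.1) := lt_min hgx hgy
      have htend : Tendsto (fun D : ℕ => (D:ℝ) * min (x p.2 - x p.1) (y p.2 - y p.1))
          atTop atTop := Tendsto.atTop_mul_const hgap tendsto_natCast_atTop_atTop
      filter_upwards [htend.eventually_gt_atTop 1] with D hD
      intro _
      have h1 : 1 < (D:ℝ) * (x p.2 - x p.1) := by
        calc (1:ℝ) < (D:ℝ) * min (x p.2 - x p.1) (y p.2 - y p.1) := hD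
        _ ≤ (D:ℝ) * (x p.2 - x p.1) := by
            apply mul_le_mul_of_nonneg_left (min_le_left _ _) (Nat.cast_nonneg D)
      have h2 : 1 < (D:ℝ) * (y p.2 - y p.1) := by
        calc (1:ℝ) < (D:ℝ) * min (x p.2 - x p.1) (y p.2 - y p.1) := hD
        _ ≤ (D:ℝ) * (y p.2 - y p.1) := by
            apply mul_le_mul_of_nonneg_left (min_le_right _ _) (Nat.cast_nonneg D)
      constructor
      · have hlow : ((a D p.1 : ℤ):ℝ) ≤ (D:ℝ) * x p.1 := Int.floor_le _
        have hhigh : (D:ℝ) * x p.2 - 1 < ((a D p.2 : ℤ):ℝ) := Int.sub_one_lt_floor _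
        have : ((a D p.1 : ℤ):ℝ) < ((a D p.2 : ℤ):ℝ) := by nlinarith
        exact_mod_cast this
      · have hlow : ((b D p.1 : ℤ):ℝ) ≤ (D:ℝ) * y p.1 := Int.floor_le _
        have hhigh : (D:ℝ) * y p.2 - 1 < ((b D p.2 : ℤ):ℝ) := Int.sub_one_lt_floor _
        have : ((b D p.1 : ℤ):ℝ) < ((b D p.2 : ℤ):ℝ) := by nlinarith
        exact_mod_cast this
    · filter_upwards with D
      intro hcon
      exact absurd hcon hp
  have hdet : ∀ᶠ D : ℕ in atTop, 0 ≤ (M D).det := by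
    filter_upwards [hmono] with D hD
    rw [hM]
    simp only
    rw [Matrix.det_smul]
    apply mul_nonneg
    · apply pow_nonneg
      positivity
    · exact dtn n r (a D) (b D) (fun i j hij => (hD (i, j) hij).1)
        (fun i j hij => (hD (i, j) hij).2)
  have hentry : ∀ j k : Fin r, Tendsto (fun D => M D j k) atTop
      (𝓝 (tp (n:ℝ) (x j - y k))) := by
    intro j k
    rcases le_or_gt (x j) (y k) with hle | hlt
    · -- entry is identically zero
      have hz : ∀ D : ℕ, M D j k = 0 := by
        intro D
        have hab : a D j ≤ b D k :=
          Int.floor_le_floor (mul_le_mul_of_nonneg_left hle (Nat.cast_nonneg D))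
        rw [hM]
        simp only [Matrix.smul_apply, Matrix.of_apply, smul_eq_mul]
        rw [show kk n (a D j) (b D k) = 0 from if_neg (by omega), mul_zero]
      rw [tp_of_nonpos (by linarith) _]
      simp only [hz]
      exact tendsto_const_nhds
    · -- positive case
      have hδ : 0 < x j - y k := by linarith
      have hev : ∀ᶠ D : ℕ in atTop, (n:ℤ) ≤ a D j - b D k - 1 := by
        have htend : Tendsto (fun D : ℕ => (D:ℝ) * (x j - y k)) atTop atTop :=
          Tendsto.atTop_mul_const hδ tendsto_natCast_atTop_atTop
        filter_upwards [htend.eventually_gt_atTop ((n:ℝ) + 2)] with D hD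
        have h1 : ((a D j : ℤ):ℝ) > (D:ℝ) * x j - 1 := Int.sub_one_lt_floor _
        have h2 : ((b D k : ℤ):ℝ) ≤ (D:ℝ) * y k := Int.floor_le _
        have : ((n:ℝ)) ≤ ((a D j : ℤ):ℝ) - ((b D k : ℤ):ℝ) - 1 := by nlinarith
        exact_mod_cast this
      have heq : ∀ᶠ D : ℕ in atTop, M D j k
          = ∏ i ∈ Finset.range n, (((a D j : ℤ):ℝ) - ((b D k : ℤ):ℝ) - 1 - i) / D := by
        filter_upwards [hev] with D hD
        set u : ℤ := a D j - b D k - 1 with hu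
        have hba : b D k < a D j := by omega
        have hun : (n:ℤ) ≤ u := hD
        rw [hM]
        simp only [Matrix.smul_apply, Matrix.of_apply, smul_eq_mul]
        rw [show kk n (a D j) (b D k) = ((u.toNat.choose n : ℕ) : ℝ) from if_pos hba]
        have hfac : ((Nat.factorial n) : ℝ) * (u.toNat.choose n : ℕ) = (u.toNat.descFactorial n : ℕ) := by
          rw [Nat.descFactorial_eq_factorial_mul_choose]
          push_cast
          ring
        have hprod : ((u.toNat.descFactorial n : ℕ) : ℝ)
            = ∏ i ∈ Finset.range n, ((u:ℝ) - i) := by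
          rw [Nat.descFactorial_eq_prod_range]
          push_cast
          apply Finset.prod_congr rfl
          intro i hi
          rw [Finset.mem_range] at hi
          have hiu : (i:ℤ) ≤ u := by omega
          rw [Nat.cast_sub (by omega : i ≤ u.toNat)]
          push_cast
          congr 1
          exact_mod_cast Int.toNat_of_nonneg (by omega : (0:ℤ) ≤ u)
        calc ((Nat.factorial n) : ℝ) / (D:ℝ)^n * (u.toNat.choose n : ℕ)
            = (((Nat.factorial n) : ℝ) * (u.toNat.choose n : ℕ)) / (D:ℝ)^n := by ring
        _ = (∏ i ∈ Finset.range n, ((u:ℝ) - i)) / (D:ℝ)^n := by rw [hfac, hprod]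
        _ = ∏ i ∈ Finset.range n, (((u:ℤ):ℝ) - i) / D := by
              rw [Finset.prod_div_distrib]
              congr 1
              rw [Finset.prod_const, Finset.card_range]
        _ = ∏ i ∈ Finset.range n, (((a D j : ℤ):ℝ) - ((b D k : ℤ):ℝ) - 1 - i) / D := by
              apply Finset.prod_congr rfl
              intro i _
              rw [hu]
              push_cast
              ring_nf
      have hlimprod : Tendsto
          (fun D : ℕ => ∏ i ∈ Finset.range n, (((a D j : ℤ):ℝ) - ((b D k : ℤ):ℝ) - 1 - i) / D)
          atTop (𝓝 (tp (n:ℝ) (x j - y k))) := by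
        have hval : tp (n:ℝ) (x j - y k) = ∏ _i ∈ Finset.range n, (x j - y k) := by
          rw [show tp (n:ℝ) (x j - y k) = (x j - y k) ^ (n:ℝ) from if_pos hδ]
          rw [Real.rpow_natCast, Finset.prod_const, Finset.card_range]
        rw [hval]
        apply tendsto_finset_prod
        intro i _
        have hfac : ∀ D : ℕ, (((a D j : ℤ):ℝ) - ((b D k : ℤ):ℝ) - 1 - i) / D
            = ((a D j : ℤ):ℝ)/D - ((b D k : ℤ):ℝ)/D - (1 + (i:ℝ))/D := by
          intro D
          rw [show (((a D j : ℤ):ℝ) - ((b D k : ℤ):ℝ) - 1 - i)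
              = ((a D j : ℤ):ℝ) - ((b D k : ℤ):ℝ) - (1 + (i:ℝ)) from by ring]
          rw [sub_div, sub_div]
        simp only [hfac]
        have h1 := floor_div_tendsto (x j)
        have h2 := floor_div_tendsto (y k)
        have h3 := tendsto_const_div_atTop_nhds_zero_nat (1 + (i:ℝ))
        have := (h1.sub h2).sub h3
        simpa using this
      exact hlimprod.congr' (heq.mono fun D hD => hD.symm)
  have hlim : Tendsto (fun D => (M D).det) atTop
      (𝓝 (Matrix.of fun j k : Fin r => tp (n:ℝ) (x j - y k)).det) := by
    have hMt : Tendsto M atTop (𝓝 (Matrix.of fun j k : Fin r => tp (n:ℝ) (x j - y k))) := by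
      refine tendsto_pi_nhds.2 ?_
      intro j
      rw [tendsto_pi_nhds]
      intro k
      exact hentry j k
    exact ((Continuous.matrix_det continuous_id).tendsto _).comp hMt
  exact ge_of_tendsto hlim hdet

/-- Real power with the convention `0 ^ α := 0` (including `0 ^ 0 := 0`). -/
noncomputable def pow0 (x α : ℝ) : ℝ := if x = 0 then 0 else x ^ α

/-- A kernel `K` is totally non-negative of order `p` on `X × Y`. -/
def TNpKer (p : ℕ) (X Y : Set ℝ) (K : ℝ → ℝ → ℝ) : Prop :=
  ∀ r : ℕ, 1 ≤ r → r ≤ p → ∀ x y : Fin r → ℝ,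
    StrictMono x → StrictMono y → (∀ j, x j ∈ X) → (∀ j, y j ∈ Y) →
      0 ≤ (Matrix.of fun j k => K (x j) (y k)).det

/-- Karlin's kernel `Ω(x) = x e^{-x}` for `x > 0`, else `0`. -/
noncomputable def Omega (x : ℝ) : ℝ := if 0 < x then x * Real.exp (-x) else 0

lemma entry_eq (α : ℝ) (t : ℝ) :
    pow0 (Omega t) α = Real.exp (-(α * t)) * tp α t := by
  unfold pow0 Omega tp
  by_cases h : 0 < t
  · rw [if_pos h, if_pos h]
    have hpos : 0 < t * Real.exp (-t) := mul_pos h (Real.exp_pos _)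
    rw [if_neg (ne_of_gt hpos)]
    rw [Real.mul_rpow h.le (Real.exp_nonneg _)]
    rw [Real.rpow_def_of_pos (Real.exp_pos _), Real.log_exp]
    rw [show -t * α = -(α * t) from by ring]
    ring
  · rw [if_neg h, if_neg h, if_pos rfl, mul_zero]

theorem stmt0 (p : ℕ) (hp : 2 ≤ p) (α : ℝ) (hα : 0 ≤ α)
    (h : (∃ n : ℕ, α = n) ∨ (p : ℝ) - 2 ≤ α) :
    TNpKer p Set.univ Set.univ (fun x y => pow0 (Omega (x - y)) α) := by
  intro r hr1 hrp x y hx hy _ _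
  have hfact : (Matrix.of fun j k : Fin r => pow0 (Omega (x j - y k)) α)
      = Matrix.of fun j k : Fin r =>
          Real.exp (-(α * x j)) * (Real.exp (α * y k) * tp α (x j - y k)) := by
    ext j k
    simp only [Matrix.of_apply]
    rw [entry_eq α]
    rw [show -(α * (x j - y k)) = -(α * x j) + α * y k from by ring]
    rw [Real.exp_add]
    ring
  have hcore : 0 ≤ (Matrix.of fun j k : Fin r => tp α (x j - y k)).det := by
    by_cases hgt : (r:ℝ) - 2 < α
    · exact core_real (by omega) α hgt hα x y hx hy
    · have hn : ∃ n : ℕ, α = n := by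
        rcases h with h' | h'
        · exact h'
        · push_neg at hgt
          have hrp' : (r:ℝ) ≤ (p:ℝ) := by exact_mod_cast hrp
          have hα2 : α = (p:ℝ) - 2 := by linarith
          refine ⟨p - 2, ?_⟩
          rw [hα2, Nat.cast_sub hp]
          norm_num
      obtain ⟨n, rfl⟩ := hn
      exact core_nat n x y hx hy
  show 0 ≤ (Matrix.of fun j k : Fin r => pow0 (Omega (x j - y k)) α).det
  rw [hfact]
  rw [show (Matrix.of fun j k : Fin r =>
        Real.exp (-(α * x j)) * (Real.exp (α * y k) * tp α (x j - y k)))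
      = (Matrix.of fun i j : Fin r => (fun j' => Real.exp (-(α * x j'))) i *
          (Matrix.of fun j' k : Fin r => Real.exp (α * y k) * tp α (x j' - y k)) i j)
      from rfl]
  rw [Matrix.det_mul_column]
  rw [show (Matrix.of fun j k : Fin r => Real.exp (α * y k) * tp α (x j - y k))
      = (Matrix.of fun i j : Fin r => (fun k => Real.exp (α * y k)) j *
          (Matrix.of fun j' k : Fin r => tp α (x j' - y k)) i j)
      from rfl]
  rw [Matrix.det_mul_row]
  apply mul_nonneg
  · apply le_of_lt
    apply Finset.prod_pos
    intro i _
    exact Real.exp_pos _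
  · apply mul_nonneg
    · apply le_of_lt
      apply Finset.prod_pos
      intro i _
      exact Real.exp_pos _
    · exact hcore
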